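/- The sequent I ⊗ A ⊢ A is derivable in LSkT for every formula A, while X ⊢ I ⊗ X is not derivable in LSkT for an atom X. -/
import Mathlib


/-- Formulae of left skew monoidal closed logic: atoms, unit I, ⊗, ⊸. -/
inductive Fma : Type
  | atom : ℕ → Fma
  | I : Fma
  | tens : Fma → Fma → Fma
  | lolli : Fma → Fma → Fma

/-- Trees: formulae, the empty tree, and pairing. -/
inductive Tr : Type
  | fma : Fma → Tr
  | emp : Tr
  | pair : Tr → Tr → Tr

/-- Contexts: trees with a single hole. -/
inductive Ctx : Type
  | hole : Ctx
  | pairL : Ctx → Tr → Ctx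
  | pairR : Tr → Ctx → Ctx

/-- Substitution of a tree into the hole of a context. -/
def plug : Ctx → Tr → Tr
  | Ctx.hole, U => U
  | Ctx.pairL C T, U => Tr.pair (plug C U) T
  | Ctx.pairR T C, U => Tr.pair T (plug C U)

/-- Derivability in the tree sequent calculus LSkT: `TDer T A` means `T ⊢ A`. -/
inductive TDer : Tr → Fma → Prop
  | ax {A} : TDer (Tr.fma A) A
  | IL {T C} : TDer (plug T Tr.emp) C → TDer (plug T (Tr.fma Fma.I)) C
  | IR : TDer Tr.emp Fma.I
  | tensL {T A B C} : TDer (plug T (Tr.pair (Tr.fma A) (Tr.fma B))) C →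
      TDer (plug T (Tr.fma (Fma.tens A B))) C
  | tensR {T U A B} : TDer T A → TDer U B → TDer (Tr.pair T U) (Fma.tens A B)
  | lolliL {T U A B C} : TDer U A → TDer (plug T (Tr.fma B)) C →
      TDer (plug T (Tr.pair (Tr.fma (Fma.lolli A B)) U)) C
  | lolliR {T A B} : TDer (Tr.pair T (Tr.fma A)) B → TDer T (Fma.lolli A B)
  | assoc {T U₀ U₁ U₂ C} : TDer (plug T (Tr.pair U₀ (Tr.pair U₁ U₂))) C →
      TDer (plug T (Tr.pair (Tr.pair U₀ U₁) U₂)) C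
  | unitL {T U C} : TDer (plug T U) C → TDer (plug T (Tr.pair Tr.emp U)) C
  | unitR {T U C} : TDer (plug T (Tr.pair U Tr.emp)) C → TDer (plug T U) C

/-- Boolean semantics of formulae: "the leftmost factor is non-unit-like". -/
def fval : Fma → Bool
  | Fma.atom _ => true
  | Fma.I => false
  | Fma.tens A _ => fval A
  | Fma.lolli _ B => fval B

/-- Boolean semantics of trees: value of the leftmost leaf. -/
def gval : Tr → Bool
  | Tr.fma A => fval A
  | Tr.emp => false
  | Tr.pair T _ => gval T

/-- `gval ∘ plug C` is monotone in the plugged tree. -/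
lemma gval_plug_mono {U U' : Tr} (h : gval U = true → gval U' = true) :
    ∀ C : Ctx, gval (plug C U) = true → gval (plug C U') = true := by
  intro C
  induction C with
  | hole => exact h
  | pairL C T ih => exact ih
  | pairR T C ih => simp [plug, gval]

/-- Soundness of the boolean semantics for LSkT. -/
lemma tder_sound {T : Tr} {C : Fma} (d : TDer T C) :
    gval T = true → fval C = true := by
  induction d with
  | ax => exact id
  | IL _ ih =>
      intro h
      exact ih (gval_plug_mono (U := Tr.fma Fma.I) (by simp [gval, fval]) _ h)
  | IR => simp [gval] at *
  | tensL _ ih =>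
      intro h
      refine ih (gval_plug_mono (U := Tr.fma (Fma.tens _ _)) ?_ _ h)
      simp [gval, fval]
  | tensR _ _ ihA _ =>
      intro h
      simpa [fval] using ihA (by simpa [gval] using h)
  | lolliL _ _ _ ihB =>
      intro h
      refine ihB (gval_plug_mono (U := Tr.pair (Tr.fma (Fma.lolli _ _)) _) ?_ _ h)
      simp [gval, fval]
  | lolliR _ ih =>
      intro h
      simpa [fval] using ih (by simpa [gval] using h)
  | assoc _ ih =>
      intro h
      refine ih (gval_plug_mono (U := Tr.pair (Tr.pair _ _) _) ?_ _ h)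
      simp [gval]
  | unitL _ ih =>
      intro h
      refine ih (gval_plug_mono (U := Tr.pair Tr.emp _) ?_ _ h)
      simp [gval]
  | unitR _ ih =>
      intro h
      refine ih (gval_plug_mono ?_ _ h)
      simp [gval]

/-- `I ⊗ A ⊢ A` is derivable in LSkT for every `A`, but `X ⊢ I ⊗ X` is not
derivable for an atom `X`. -/
theorem lam_derivable_rho_like_underivable :
    (∀ A : Fma, TDer (Tr.fma (Fma.tens Fma.I A)) A) ∧
    (∀ X : ℕ, ¬ TDer (Tr.fma (Fma.atom X)) (Fma.tens Fma.I (Fma.atom X))) := by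
  constructor
  · intro A
    have h1 : TDer (plug Ctx.hole (Tr.fma A)) A := TDer.ax
    have h2 : TDer (plug Ctx.hole (Tr.pair Tr.emp (Tr.fma A))) A := TDer.unitL h1
    have h3 : TDer (plug (Ctx.pairL Ctx.hole (Tr.fma A)) Tr.emp) A := h2
    have h4 : TDer (plug (Ctx.pairL Ctx.hole (Tr.fma A)) (Tr.fma Fma.I)) A := TDer.IL h3
    have h5 : TDer (plug Ctx.hole (Tr.pair (Tr.fma Fma.I) (Tr.fma A))) A := h4
    exact TDer.tensL (T := Ctx.hole) h5
  · intro X hd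
    have := tder_sound hd (by simp [gval, fval])
    simp [fval] at this
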